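/- Let n be a positive integer, ε_k = e^{2πik/n}, and let I_1, I_2, I_3, I_4 each be a finite set of at most L consecutive integers. Then ∑_{a,b,c ∈ ℤ/nℤ} |∑_{(i_1,i_2,i_3,i_4) ∈ I_1×I_2×I_3×I_4, i_1+i_2=i_3+i_4} ε_a^{i_2} ε_b^{i_3} ε_c^{i_4}| ≤ 936 max(n,L)^3 (1 + log n)^3. -/

import Mathlib

open Complex Real


noncomputable def zta (n : ℕ) : ℂ := Complex.exp (2 * Real.pi * Complex.I / n)

lemma zta_ne_zero (n : ℕ) : zta n ≠ 0 := Complex.exp_ne_zero _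

noncomputable def ff (n L : ℕ) (t : ℤ) : ℝ :=
  if zta n ^ t = 1 then (L : ℝ) else min (L : ℝ) (2 / ‖zta n ^ t - 1‖)

lemma ff_nonneg (n L : ℕ) (t : ℤ) : 0 ≤ ff n L t := by
  unfold ff; split
  · positivity
  · exact le_min (by positivity) (by positivity)

lemma ff_le (n L : ℕ) (t : ℤ) : ff n L t ≤ L := by
  unfold ff; split
  · exact le_refl _
  · exact min_le_left _ _

lemma zta_pow_n (n : ℕ) (hn : 0 < n) : zta n ^ (n : ℤ) = 1 := by
  rw [zta, ← Complex.exp_int_mul]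
  have hn' : (n : ℂ) ≠ 0 := Nat.cast_ne_zero.mpr hn.ne'
  rw [show ((n : ℤ) : ℂ) * (2 * Real.pi * Complex.I / n) = 2 * Real.pi * Complex.I by
    push_cast; field_simp]
  exact Complex.exp_two_pi_mul_I

lemma ff_periodic (n L : ℕ) (hn : 0 < n) (t : ℤ) : ff n L (t + n) = ff n L t := by
  unfold ff
  rw [zpow_add₀ (zta_ne_zero n), zta_pow_n n hn, mul_one]

lemma geo_ident (z : ℂ) (hz : z ≠ 0) (u : ℤ) (m : ℕ) :
    (z - 1) * ∑ i ∈ Finset.Ico u (u + m), z ^ i = z ^ (u + m) - z ^ u := by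
  induction m with
  | zero => simp
  | succ m ih =>
      have hins : Finset.Ico u (u + (m+1:ℕ)) = insert (u + m) (Finset.Ico u (u + m)) := by
        ext x; simp only [Finset.mem_Ico, Finset.mem_insert]; push_cast; omega
      rw [hins, Finset.sum_insert (by simp), mul_add, ih]
      have h2 : z ^ (u + ((m:ℕ)+1:ℕ) : ℤ) = z ^ ((u:ℤ) + m) * z := by
        rw [show (u + ((m:ℕ)+1:ℕ) : ℤ) = (u + m) + 1 by push_cast; ring,
          zpow_add₀ hz, zpow_one]
      rw [h2]
      ring

lemma geo_norm_osc (z : ℂ) (hz : z ≠ 0) (hz1 : ‖z‖ = 1) (hzne : z ≠ 1) (u v : ℤ) :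
    ‖∑ i ∈ Finset.Ico u v, z ^ i‖ ≤ 2 / ‖z - 1‖ := by
  have hd : ‖z - 1‖ ≠ 0 := by
    simp only [ne_eq, norm_eq_zero, sub_eq_zero]
    exact hzne
  have hd' : 0 < ‖z - 1‖ := lt_of_le_of_ne (norm_nonneg _) (Ne.symm hd)
  rcases le_or_gt v u with h | h
  · rw [Finset.Ico_eq_empty (by omega), Finset.sum_empty, norm_zero]
    positivity
  · have hv : v = u + ((v - u).toNat : ℤ) := by omega
    have := geo_ident z hz u (v - u).toNat
    rw [← hv] at this
    have heq : ∑ i ∈ Finset.Ico u v, z ^ i = (z ^ v - z ^ u) / (z - 1) := by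
      rw [eq_div_iff (sub_ne_zero.mpr hzne), mul_comm, this]
    rw [heq, norm_div, div_le_div_iff₀ hd' hd', mul_comm]
    have h1 : ‖z ^ v - z ^ u‖ ≤ 2 := by
      calc ‖z ^ v - z ^ u‖ ≤ ‖z ^ v‖ + ‖z ^ u‖ := norm_sub_le _ _
        _ = 2 := by rw [norm_zpow, norm_zpow, hz1]; norm_num
    nlinarith

lemma geo_norm_card (z : ℂ) (hz1 : ‖z‖ = 1) (u v : ℤ) :
    ‖∑ i ∈ Finset.Ico u v, z ^ i‖ ≤ ((v - u).toNat : ℝ) := by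
  calc ‖∑ i ∈ Finset.Ico u v, z ^ i‖ ≤ ∑ i ∈ Finset.Ico u v, ‖z ^ i‖ :=
        norm_sum_le _ _
    _ = ∑ i ∈ Finset.Ico u v, 1 := by
        apply Finset.sum_congr rfl; intro i _
        rw [norm_zpow, hz1, one_zpow]
    _ ≤ ((v - u).toNat : ℝ) := by
        rw [Finset.sum_const, Int.card_Ico, nsmul_eq_mul, mul_one]

-- dup zta
lemma zta_norm (n : ℕ) : ‖zta n‖ = 1 := by
  rw [zta, Complex.norm_exp]
  have : (2 * Real.pi * Complex.I / n).re = 0 := by simp [Complex.div_re]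
  rw [this, Real.exp_zero]

-- dup ff
lemma geo (n L : ℕ) (t u v : ℤ) (hlen : v - u ≤ (L:ℤ)) :
    ‖∑ i ∈ Finset.Ico u v, zta n ^ (t * i)‖ ≤ ff n L t := by
  have hrw : ∀ i : ℤ, zta n ^ (t * i) = (zta n ^ t) ^ i := fun i => by
    rw [← zpow_mul]
  simp only [hrw]
  set z := zta n ^ t with hzdef
  have hz : z ≠ 0 := zpow_ne_zero _ (zta_ne_zero n)
  have hz1 : ‖z‖ = 1 := by rw [hzdef, norm_zpow, zta_norm, one_zpow]
  have hcard : ‖∑ i ∈ Finset.Ico u v, z ^ i‖ ≤ (L : ℝ) := by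
    refine (geo_norm_card z hz1 u v).trans ?_
    have : (v - u).toNat ≤ L := by omega
    exact_mod_cast this
  unfold ff
  split
  · exact hcard
  · exact le_min hcard (geo_norm_osc z hz hz1 (by assumption) u v)

noncomputable def UU (n : ℕ) (a3 b3 a4 b4 w1 w2 p q : ℤ) : ℂ :=
  ∑ x ∈ (Finset.Ico a3 b3 ×ˢ Finset.Ico a4 b4).filter
      (fun x => x.1 + x.2 ∈ Finset.Ico w1 w2),
    zta n ^ (p * x.1 + q * x.2)

lemma U_rw1 (n : ℕ) (a3 b3 a4 b4 w1 w2 p q : ℤ) :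
    UU n a3 b3 a4 b4 w1 w2 p q = ∑ i3 ∈ Finset.Ico a3 b3, zta n ^ (p * i3) *
      ∑ i4 ∈ Finset.Ico (max a4 (w1 - i3)) (min b4 (w2 - i3)), zta n ^ (q * i4) := by
  unfold UU
  rw [Finset.sum_filter, Finset.sum_product]
  refine Finset.sum_congr rfl (fun i3 _ => ?_)
  have hset : Finset.Ico (max a4 (w1 - i3)) (min b4 (w2 - i3)) =
      (Finset.Ico a4 b4).filter (fun i4 => i3 + i4 ∈ Finset.Ico w1 w2) := by
    ext x; simp only [Finset.mem_Ico, Finset.mem_filter]; omega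
  rw [hset, Finset.mul_sum, Finset.sum_filter]
  refine Finset.sum_congr rfl (fun i4 _ => ?_)
  split
  · rw [← zpow_add₀ (zta_ne_zero n)]
  · rfl

lemma U_rw2 (n : ℕ) (a3 b3 a4 b4 w1 w2 p q : ℤ) :
    UU n a3 b3 a4 b4 w1 w2 p q = ∑ i4 ∈ Finset.Ico a4 b4, zta n ^ (q * i4) *
      ∑ i3 ∈ Finset.Ico (max a3 (w1 - i4)) (min b3 (w2 - i4)), zta n ^ (p * i3) := by
  unfold UU
  rw [Finset.sum_filter, Finset.sum_product, Finset.sum_comm]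
  refine Finset.sum_congr rfl (fun i4 _ => ?_)
  have hset : Finset.Ico (max a3 (w1 - i4)) (min b3 (w2 - i4)) =
      (Finset.Ico a3 b3).filter (fun i3 => i3 + i4 ∈ Finset.Ico w1 w2) := by
    ext x; simp only [Finset.mem_Ico, Finset.mem_filter]; omega
  rw [hset, Finset.mul_sum, Finset.sum_filter]
  refine Finset.sum_congr rfl (fun i3 _ => ?_)
  split
  · rw [← zpow_add₀ (zta_ne_zero n)]; ring_nf
  · rfl

-- dup ff
-- dup UU
lemma geo_ident' (z : ℂ) (hz : z ≠ 0) (u v : ℤ) (huv : u ≤ v) :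
    (z - 1) * ∑ i ∈ Finset.Ico u v, z ^ i = z ^ v - z ^ u := by
  have hv : v = u + ((v - u).toNat : ℤ) := by omega
  rw [hv, geo_ident z hz u (v - u).toNat]

lemma four_term (z : ℂ) (hz : z ≠ 0) (α β γ δ : ℤ) (hab : α ≤ β) (hgd : γ ≤ δ) :
    (z - 1) * ∑ i ∈ Finset.Ico (max α γ) (min β δ), z ^ i =
      z ^ max α δ + z ^ max β γ - z ^ max β δ - z ^ max α γ := by
  rcases le_or_gt (max α γ) (min β δ) with h | h
  · rw [geo_ident' z hz _ _ h]
    rcases le_total β δ with hbd | hdb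
    · have e1 : min β δ = β := by omega
      have e2 : max β δ = δ := by omega
      have e3 : max α δ = δ := by omega
      have e4 : max β γ = β := by omega
      rw [e1, e2, e3, e4]; ring
    · have e1 : min β δ = δ := by omega
      have e2 : max β δ = β := by omega
      have e3 : max α δ = δ := by omega
      have e4 : max β γ = β := by omega
      rw [e1, e2, e3, e4]; ring
  · rw [Finset.Ico_eq_empty (by omega), Finset.sum_empty, mul_zero]
    rcases le_total β δ with hbd | hdb
    · have e1 : max α δ = δ := by omega
      have e2 : max β δ = δ := by omega
      have e3 : max β γ = max α γ := by omega
      rw [e1, e2, e3]; ring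
    · have e1 : max α δ = max α γ := by omega
      have e2 : max β δ = β := by omega
      have e3 : max β γ = β := by omega
      rw [e1, e2, e3]; ring

lemma Y_bound (n L : ℕ) (a4 b4 : ℤ) (hlen4 : b4 - a4 ≤ (L:ℤ)) (p q g w : ℤ) :
    ‖∑ i4 ∈ Finset.Ico a4 b4, zta n ^ (q * i4 + p * max g (w - i4))‖ ≤
      ff n L q + ff n L (q - p) := by
  rw [← Finset.sum_filter_add_sum_filter_not (Finset.Ico a4 b4) (fun i4 => w - g ≤ i4)]
  have hA : (Finset.Ico a4 b4).filter (fun i4 => w - g ≤ i4) =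
      Finset.Ico (max a4 (w - g)) b4 := by
    ext x; simp only [Finset.mem_Ico, Finset.mem_filter]; omega
  have hB : (Finset.Ico a4 b4).filter (fun i4 => ¬ w - g ≤ i4) =
      Finset.Ico a4 (min b4 (w - g)) := by
    ext x; simp only [Finset.mem_Ico, Finset.mem_filter]; omega
  rw [hA, hB]
  have eA : ∑ i4 ∈ Finset.Ico (max a4 (w - g)) b4, zta n ^ (q * i4 + p * max g (w - i4))
      = zta n ^ (p * g) * ∑ i4 ∈ Finset.Ico (max a4 (w - g)) b4, zta n ^ (q * i4) := by
    rw [Finset.mul_sum]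
    refine Finset.sum_congr rfl (fun i hi => ?_)
    simp only [Finset.mem_Ico] at hi
    have hm : max g (w - i) = g := by omega
    rw [hm, ← zpow_add₀ (zta_ne_zero n)]; ring_nf
  have eB : ∑ i4 ∈ Finset.Ico a4 (min b4 (w - g)), zta n ^ (q * i4 + p * max g (w - i4))
      = zta n ^ (p * w) * ∑ i4 ∈ Finset.Ico a4 (min b4 (w - g)), zta n ^ ((q - p) * i4) := by
    rw [Finset.mul_sum]
    refine Finset.sum_congr rfl (fun i hi => ?_)
    simp only [Finset.mem_Ico] at hi
    have hm : max g (w - i) = w - i := by omega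
    rw [hm, ← zpow_add₀ (zta_ne_zero n)]; ring_nf
  rw [eA, eB]
  refine (norm_add_le _ _).trans ?_
  gcongr
  · rw [norm_mul, norm_zpow, zta_norm, one_zpow, one_mul]
    exact geo n L q _ _ (by omega)
  · rw [norm_mul, norm_zpow, zta_norm, one_zpow, one_mul]
    exact geo n L (q - p) _ _ (by omega)

-- dup ff
-- dup UU
lemma ff_eq_L_of (n L : ℕ) (p : ℤ) (h : zta n ^ p = 1 ∨ (L:ℝ) ≤ 2 / ‖zta n ^ p - 1‖) :
    ff n L p = L := by
  unfold ff; split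
  · rfl
  · rcases h with h | h
    · exact absurd h (by assumption)
    · exact min_eq_left h

lemma U_bound (n L : ℕ) (a3 b3 a4 b4 w1 w2 p q : ℤ) (h33 : a3 ≤ b3)
    (hlen3 : b3 - a3 ≤ (L:ℤ)) (hlen4 : b4 - a4 ≤ (L:ℤ)) :
    ‖UU n a3 b3 a4 b4 w1 w2 p q‖ ≤ 2 * ff n L p * (ff n L q + ff n L (q - p)) := by
  have hffq := ff_nonneg n L q
  have hffqp := ff_nonneg n L (q - p)
  have hffp := ff_nonneg n L p
  by_cases hw : w1 ≤ w2
  swap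
  · have hempty : Finset.Ico w1 w2 = ∅ := Finset.Ico_eq_empty (by omega)
    unfold UU
    rw [hempty]
    simp only [Finset.notMem_empty, Finset.filter_false, Finset.sum_empty, norm_zero]
    positivity
  by_cases hcase : zta n ^ p = 1 ∨ (L:ℝ) ≤ 2 / ‖zta n ^ p - 1‖
  · -- case A : ff p = L, use trivial bound in i3
    have hfp : ff n L p = L := ff_eq_L_of n L p hcase
    rw [U_rw1]
    calc ‖∑ i3 ∈ Finset.Ico a3 b3, zta n ^ (p * i3) *
          ∑ i4 ∈ Finset.Ico (max a4 (w1 - i3)) (min b4 (w2 - i3)), zta n ^ (q * i4)‖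
        ≤ ∑ i3 ∈ Finset.Ico a3 b3, ‖zta n ^ (p * i3) *
          ∑ i4 ∈ Finset.Ico (max a4 (w1 - i3)) (min b4 (w2 - i3)), zta n ^ (q * i4)‖ :=
          norm_sum_le _ _
      _ ≤ ∑ i3 ∈ Finset.Ico a3 b3, ff n L q := by
          refine Finset.sum_le_sum (fun i3 _ => ?_)
          rw [norm_mul, norm_zpow, zta_norm, one_zpow, one_mul]
          exact geo n L q _ _ (by omega)
      _ = (Finset.Ico a3 b3).card * ff n L q := by
          rw [Finset.sum_const, nsmul_eq_mul]
      _ ≤ L * ff n L q := by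
          have : (Finset.Ico a3 b3).card ≤ L := by
            rw [Int.card_Ico]; omega
          exact mul_le_mul_of_nonneg_right (by exact_mod_cast this) hffq
      _ ≤ 2 * ff n L p * (ff n L q + ff n L (q - p)) := by
          rw [hfp]; nlinarith [Nat.cast_nonneg (α := ℝ) L]
  · -- case B : oscillation
    push_neg at hcase
    obtain ⟨hne, hlt⟩ := hcase
    have hzp : zta n ^ p ≠ 0 := zpow_ne_zero _ (zta_ne_zero n)
    have hdpos : 0 < ‖zta n ^ p - 1‖ := by
      rw [norm_pos_iff, sub_ne_zero]; exact hne
    have hfp : ff n L p = 2 / ‖zta n ^ p - 1‖ := by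
      unfold ff; rw [if_neg hne]; exact min_eq_right hlt.le
    -- identity
    have hident : (zta n ^ p - 1) * UU n a3 b3 a4 b4 w1 w2 p q =
        (∑ i4 ∈ Finset.Ico a4 b4, zta n ^ (q * i4 + p * max a3 (w2 - i4)))
        + (∑ i4 ∈ Finset.Ico a4 b4, zta n ^ (q * i4 + p * max b3 (w1 - i4)))
        - (∑ i4 ∈ Finset.Ico a4 b4, zta n ^ (q * i4 + p * max b3 (w2 - i4)))
        - (∑ i4 ∈ Finset.Ico a4 b4, zta n ^ (q * i4 + p * max a3 (w1 - i4))) := by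
      rw [U_rw2, Finset.mul_sum]
      rw [← Finset.sum_add_distrib, ← Finset.sum_sub_distrib, ← Finset.sum_sub_distrib]
      refine Finset.sum_congr rfl (fun i4 _ => ?_)
      have h4 := four_term (zta n ^ p) hzp a3 b3 (w1 - i4) (w2 - i4) h33 (by omega)
      have hz : ∀ m : ℤ, (zta n ^ p) ^ m = zta n ^ (p * m) := fun m => by
        rw [← zpow_mul]
      simp only [hz] at h4
      calc (zta n ^ p - 1) * (zta n ^ (q * i4) *
            ∑ i3 ∈ Finset.Ico (max a3 (w1 - i4)) (min b3 (w2 - i4)), zta n ^ (p * i3))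
          = zta n ^ (q * i4) * ((zta n ^ p - 1) *
            ∑ i3 ∈ Finset.Ico (max a3 (w1 - i4)) (min b3 (w2 - i4)), zta n ^ (p * i3)) := by
            ring
        _ = zta n ^ (q * i4) * (zta n ^ (p * max a3 (w2 - i4)) + zta n ^ (p * max b3 (w1 - i4))
            - zta n ^ (p * max b3 (w2 - i4)) - zta n ^ (p * max a3 (w1 - i4))) := by
            rw [h4]
        _ = _ := by
            rw [mul_sub, mul_sub, mul_add, ← zpow_add₀ (zta_ne_zero n),
              ← zpow_add₀ (zta_ne_zero n), ← zpow_add₀ (zta_ne_zero n),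
              ← zpow_add₀ (zta_ne_zero n)]
    have hnorm4 : ‖(zta n ^ p - 1) * UU n a3 b3 a4 b4 w1 w2 p q‖ ≤
        4 * (ff n L q + ff n L (q - p)) := by
      rw [hident]
      have y1 := Y_bound n L a4 b4 hlen4 p q a3 w2
      have y2 := Y_bound n L a4 b4 hlen4 p q b3 w1
      have y3 := Y_bound n L a4 b4 hlen4 p q b3 w2
      have y4 := Y_bound n L a4 b4 hlen4 p q a3 w1
      set A := ∑ i4 ∈ Finset.Ico a4 b4, zta n ^ (q * i4 + p * max a3 (w2 - i4)) with hA
      set B := ∑ i4 ∈ Finset.Ico a4 b4, zta n ^ (q * i4 + p * max b3 (w1 - i4)) with hB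
      set C := ∑ i4 ∈ Finset.Ico a4 b4, zta n ^ (q * i4 + p * max b3 (w2 - i4)) with hC
      set D := ∑ i4 ∈ Finset.Ico a4 b4, zta n ^ (q * i4 + p * max a3 (w1 - i4)) with hD
      have n1 : ‖A + B - C - D‖ ≤ ‖A + B - C‖ + ‖D‖ := norm_sub_le _ _
      have n2 : ‖A + B - C‖ ≤ ‖A + B‖ + ‖C‖ := norm_sub_le _ _
      have n3 : ‖A + B‖ ≤ ‖A‖ + ‖B‖ := norm_add_le _ _
      linarith
    rw [norm_mul] at hnorm4
    rw [hfp]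
    rw [show 2 * (2 / ‖zta n ^ p - 1‖) * (ff n L q + ff n L (q - p)) =
      4 * (ff n L q + ff n L (q - p)) / ‖zta n ^ p - 1‖ by ring]
    rw [le_div_iff₀ hdpos]
    linarith [hnorm4]

-- dup ff
-- dup UU
-- dup SS
noncomputable def SS (n : ℕ) (a1 b1 a2 b2 a3 b3 a4 b4 a b c : ℤ) : ℂ :=
  ∑ y ∈ ((Finset.Ico a3 b3 ×ˢ Finset.Ico a4 b4) ×ˢ Finset.Ico a2 b2).filter
      (fun y => y.1.1 + y.1.2 - y.2 ∈ Finset.Ico a1 b1),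
    zta n ^ (a * y.2 + b * y.1.1 + c * y.1.2)

lemma S_rw1 (n : ℕ) (a1 b1 a2 b2 a3 b3 a4 b4 a b c : ℤ) :
    SS n a1 b1 a2 b2 a3 b3 a4 b4 a b c = ∑ i2 ∈ Finset.Ico a2 b2, zta n ^ (a * i2) *
      UU n a3 b3 a4 b4 (i2 + a1) (i2 + b1) b c := by
  unfold SS UU
  rw [Finset.sum_filter, Finset.sum_product, Finset.sum_comm]
  refine Finset.sum_congr rfl (fun i2 _ => ?_)
  rw [Finset.mul_sum, Finset.sum_filter]
  refine Finset.sum_congr rfl (fun x _ => ?_)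
  have hiff : (x.1 + x.2 ∈ Finset.Ico (i2 + a1) (i2 + b1)) ↔
      (x.1 + x.2 - i2 ∈ Finset.Ico a1 b1) := by
    simp only [Finset.mem_Ico]; omega
  by_cases hc : x.1 + x.2 - i2 ∈ Finset.Ico a1 b1
  · rw [if_pos hc, if_pos (hiff.mpr hc), ← zpow_add₀ (zta_ne_zero n)]
    ring_nf
  · rw [if_neg hc, if_neg (fun h => hc (hiff.mp h))]

lemma S_rw2 (n : ℕ) (a1 b1 a2 b2 a3 b3 a4 b4 a b c : ℤ) :
    SS n a1 b1 a2 b2 a3 b3 a4 b4 a b c = ∑ x ∈ (Finset.Ico a3 b3 ×ˢ Finset.Ico a4 b4),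
      zta n ^ (b * x.1 + c * x.2) *
      ∑ i2 ∈ Finset.Ico (max a2 (x.1 + x.2 + 1 - b1)) (min b2 (x.1 + x.2 + 1 - a1)),
        zta n ^ (a * i2) := by
  unfold SS
  rw [Finset.sum_filter, Finset.sum_product]
  refine Finset.sum_congr rfl (fun x _ => ?_)
  have hset : Finset.Ico (max a2 (x.1 + x.2 + 1 - b1)) (min b2 (x.1 + x.2 + 1 - a1)) =
      (Finset.Ico a2 b2).filter (fun i2 => x.1 + x.2 - i2 ∈ Finset.Ico a1 b1) := by
    ext i2; simp only [Finset.mem_Ico, Finset.mem_filter]; omega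
  rw [hset, Finset.mul_sum, Finset.sum_filter]
  refine Finset.sum_congr rfl (fun i2 _ => ?_)
  split
  · rw [← zpow_add₀ (zta_ne_zero n)]; ring_nf
  · rfl

lemma Z_bound (n L : ℕ) (a3 b3 a4 b4 : ℤ) (h33 : a3 ≤ b3)
    (hlen3 : b3 - a3 ≤ (L:ℤ)) (hlen4 : b4 - a4 ≤ (L:ℤ)) (a b c g h : ℤ) :
    ‖∑ x ∈ (Finset.Ico a3 b3 ×ˢ Finset.Ico a4 b4),
        zta n ^ (b * x.1 + c * x.2 + a * max g (x.1 + x.2 + 1 - h))‖ ≤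
      2 * ff n L b * (ff n L c + ff n L (c - b)) +
        2 * ff n L (b + a) * (ff n L (c + a) + ff n L (c - b)) := by
  rw [← Finset.sum_filter_add_sum_filter_not (Finset.Ico a3 b3 ×ˢ Finset.Ico a4 b4)
    (fun x => x.1 + x.2 + 1 - h ≤ g)]
  have e1 : ∑ x ∈ (Finset.Ico a3 b3 ×ˢ Finset.Ico a4 b4).filter
      (fun x => x.1 + x.2 + 1 - h ≤ g), zta n ^ (b * x.1 + c * x.2 + a * max g (x.1 + x.2 + 1 - h))
      = zta n ^ (a * g) * UU n a3 b3 a4 b4 (a3 + a4) (g + h) b c := by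
    unfold UU
    rw [Finset.mul_sum]
    have hfe : (Finset.Ico a3 b3 ×ˢ Finset.Ico a4 b4).filter
        (fun x => x.1 + x.2 + 1 - h ≤ g) = (Finset.Ico a3 b3 ×ˢ Finset.Ico a4 b4).filter
        (fun x => x.1 + x.2 ∈ Finset.Ico (a3 + a4) (g + h)) := by
      refine Finset.filter_congr (fun x hx => ?_)
      rw [Finset.mem_product, Finset.mem_Ico, Finset.mem_Ico] at hx
      simp only [Finset.mem_Ico]
      constructor
      · intro h1; exact ⟨by omega, by omega⟩
      · intro h1; omega
    rw [hfe]
    refine Finset.sum_congr rfl (fun x hx => ?_)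
    rw [Finset.mem_filter, Finset.mem_Ico] at hx
    have hm : max g (x.1 + x.2 + 1 - h) = g := by omega
    rw [hm, ← zpow_add₀ (zta_ne_zero n)]; ring_nf
  have e2 : ∑ x ∈ (Finset.Ico a3 b3 ×ˢ Finset.Ico a4 b4).filter
      (fun x => ¬ (x.1 + x.2 + 1 - h ≤ g)), zta n ^ (b * x.1 + c * x.2 + a * max g (x.1 + x.2 + 1 - h))
      = zta n ^ (a * (1 - h)) * UU n a3 b3 a4 b4 (g + h) (b3 + b4) (b + a) (c + a) := by
    unfold UU
    rw [Finset.mul_sum]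
    have hfe : (Finset.Ico a3 b3 ×ˢ Finset.Ico a4 b4).filter
        (fun x => ¬ (x.1 + x.2 + 1 - h ≤ g)) = (Finset.Ico a3 b3 ×ˢ Finset.Ico a4 b4).filter
        (fun x => x.1 + x.2 ∈ Finset.Ico (g + h) (b3 + b4)) := by
      refine Finset.filter_congr (fun x hx => ?_)
      rw [Finset.mem_product, Finset.mem_Ico, Finset.mem_Ico] at hx
      simp only [Finset.mem_Ico]
      constructor
      · intro h1; exact ⟨by omega, by omega⟩
      · intro h1; omega
    rw [hfe]
    refine Finset.sum_congr rfl (fun x hx => ?_)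
    rw [Finset.mem_filter, Finset.mem_Ico] at hx
    have hm : max g (x.1 + x.2 + 1 - h) = x.1 + x.2 + 1 - h := by omega
    rw [hm, ← zpow_add₀ (zta_ne_zero n)]; ring_nf
  rw [e1, e2]
  refine (norm_add_le _ _).trans ?_
  gcongr
  · rw [norm_mul, norm_zpow, zta_norm, one_zpow, one_mul]
    exact U_bound n L a3 b3 a4 b4 _ _ b c h33 hlen3 hlen4
  · rw [norm_mul, norm_zpow, zta_norm, one_zpow, one_mul]
    have := U_bound n L a3 b3 a4 b4 (g + h) (b3 + b4) (b + a) (c + a) h33 hlen3 hlen4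
    rw [show (c + a) - (b + a) = c - b by ring] at this
    exact this

-- dup ff
-- dup UU
-- dup SS
lemma S_bound (n L : ℕ) (a1 b1 a2 b2 a3 b3 a4 b4 a b c : ℤ) (h11 : a1 ≤ b1)
    (h22 : a2 ≤ b2) (h33 : a3 ≤ b3) (hlen2 : b2 - a2 ≤ (L:ℤ))
    (hlen3 : b3 - a3 ≤ (L:ℤ)) (hlen4 : b4 - a4 ≤ (L:ℤ)) :
    ‖SS n a1 b1 a2 b2 a3 b3 a4 b4 a b c‖ ≤
      4 * ff n L a * (ff n L b * (ff n L c + ff n L (c - b)) +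
        ff n L (b + a) * (ff n L (c + a) + ff n L (c - b))) := by
  have hffb := ff_nonneg n L b
  have hffc := ff_nonneg n L c
  have hffcb := ff_nonneg n L (c - b)
  have hffba := ff_nonneg n L (b + a)
  have hffca := ff_nonneg n L (c + a)
  by_cases hcase : zta n ^ a = 1 ∨ (L:ℝ) ≤ 2 / ‖zta n ^ a - 1‖
  · have hfa : ff n L a = L := ff_eq_L_of n L a hcase
    rw [S_rw1]
    calc ‖∑ i2 ∈ Finset.Ico a2 b2, zta n ^ (a * i2) *
          UU n a3 b3 a4 b4 (i2 + a1) (i2 + b1) b c‖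
        ≤ ∑ i2 ∈ Finset.Ico a2 b2, ‖zta n ^ (a * i2) *
          UU n a3 b3 a4 b4 (i2 + a1) (i2 + b1) b c‖ := norm_sum_le _ _
      _ ≤ ∑ i2 ∈ Finset.Ico a2 b2, 2 * ff n L b * (ff n L c + ff n L (c - b)) := by
          refine Finset.sum_le_sum (fun i2 _ => ?_)
          rw [norm_mul, norm_zpow, zta_norm, one_zpow, one_mul]
          exact U_bound n L a3 b3 a4 b4 _ _ b c h33 hlen3 hlen4
      _ = (Finset.Ico a2 b2).card * (2 * ff n L b * (ff n L c + ff n L (c - b))) := by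
          rw [Finset.sum_const, nsmul_eq_mul]
      _ ≤ L * (2 * ff n L b * (ff n L c + ff n L (c - b))) := by
          have : (Finset.Ico a2 b2).card ≤ L := by rw [Int.card_Ico]; omega
          have h2 : ((Finset.Ico a2 b2).card : ℝ) ≤ L := by exact_mod_cast this
          exact mul_le_mul_of_nonneg_right h2 (by positivity)
      _ ≤ _ := by
          rw [hfa]
          have hL0 : (0:ℝ) ≤ L := Nat.cast_nonneg L
          nlinarith [mul_nonneg (mul_nonneg hL0 hffba) (add_nonneg hffca hffcb),
            mul_nonneg (mul_nonneg hL0 hffb) (add_nonneg hffc hffcb)]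
  · push_neg at hcase
    obtain ⟨hne, hlt⟩ := hcase
    have hza : zta n ^ a ≠ 0 := zpow_ne_zero _ (zta_ne_zero n)
    have hdpos : 0 < ‖zta n ^ a - 1‖ := by
      rw [norm_pos_iff, sub_ne_zero]; exact hne
    have hfa : ff n L a = 2 / ‖zta n ^ a - 1‖ := by
      unfold ff; rw [if_neg hne]; exact min_eq_right hlt.le
    have hident : (zta n ^ a - 1) * SS n a1 b1 a2 b2 a3 b3 a4 b4 a b c =
        (∑ x ∈ (Finset.Ico a3 b3 ×ˢ Finset.Ico a4 b4),
          zta n ^ (b * x.1 + c * x.2 + a * max a2 (x.1 + x.2 + 1 - a1)))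
        + (∑ x ∈ (Finset.Ico a3 b3 ×ˢ Finset.Ico a4 b4),
          zta n ^ (b * x.1 + c * x.2 + a * max b2 (x.1 + x.2 + 1 - b1)))
        - (∑ x ∈ (Finset.Ico a3 b3 ×ˢ Finset.Ico a4 b4),
          zta n ^ (b * x.1 + c * x.2 + a * max b2 (x.1 + x.2 + 1 - a1)))
        - (∑ x ∈ (Finset.Ico a3 b3 ×ˢ Finset.Ico a4 b4),
          zta n ^ (b * x.1 + c * x.2 + a * max a2 (x.1 + x.2 + 1 - b1))) := by
      rw [S_rw2, Finset.mul_sum]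
      rw [← Finset.sum_add_distrib, ← Finset.sum_sub_distrib, ← Finset.sum_sub_distrib]
      refine Finset.sum_congr rfl (fun x _ => ?_)
      have h4 := four_term (zta n ^ a) hza a2 b2 (x.1 + x.2 + 1 - b1) (x.1 + x.2 + 1 - a1)
        h22 (by omega)
      have hz : ∀ m : ℤ, (zta n ^ a) ^ m = zta n ^ (a * m) := fun m => by rw [← zpow_mul]
      simp only [hz] at h4
      calc (zta n ^ a - 1) * (zta n ^ (b * x.1 + c * x.2) *
            ∑ i2 ∈ Finset.Ico (max a2 (x.1 + x.2 + 1 - b1)) (min b2 (x.1 + x.2 + 1 - a1)),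
              zta n ^ (a * i2))
          = zta n ^ (b * x.1 + c * x.2) * ((zta n ^ a - 1) *
            ∑ i2 ∈ Finset.Ico (max a2 (x.1 + x.2 + 1 - b1)) (min b2 (x.1 + x.2 + 1 - a1)),
              zta n ^ (a * i2)) := by ring
        _ = zta n ^ (b * x.1 + c * x.2) *
            (zta n ^ (a * max a2 (x.1 + x.2 + 1 - a1)) + zta n ^ (a * max b2 (x.1 + x.2 + 1 - b1))
            - zta n ^ (a * max b2 (x.1 + x.2 + 1 - a1))
            - zta n ^ (a * max a2 (x.1 + x.2 + 1 - b1))) := by rw [h4]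
        _ = _ := by
            rw [mul_sub, mul_sub, mul_add, ← zpow_add₀ (zta_ne_zero n),
              ← zpow_add₀ (zta_ne_zero n), ← zpow_add₀ (zta_ne_zero n),
              ← zpow_add₀ (zta_ne_zero n)]
    have hnorm4 : ‖(zta n ^ a - 1) * SS n a1 b1 a2 b2 a3 b3 a4 b4 a b c‖ ≤
        4 * (2 * ff n L b * (ff n L c + ff n L (c - b)) +
          2 * ff n L (b + a) * (ff n L (c + a) + ff n L (c - b))) := by
      rw [hident]
      have y1 := Z_bound n L a3 b3 a4 b4 h33 hlen3 hlen4 a b c a2 a1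
      have y2 := Z_bound n L a3 b3 a4 b4 h33 hlen3 hlen4 a b c b2 b1
      have y3 := Z_bound n L a3 b3 a4 b4 h33 hlen3 hlen4 a b c b2 a1
      have y4 := Z_bound n L a3 b3 a4 b4 h33 hlen3 hlen4 a b c a2 b1
      set A := ∑ x ∈ (Finset.Ico a3 b3 ×ˢ Finset.Ico a4 b4),
          zta n ^ (b * x.1 + c * x.2 + a * max a2 (x.1 + x.2 + 1 - a1)) with hA
      set B := ∑ x ∈ (Finset.Ico a3 b3 ×ˢ Finset.Ico a4 b4),
          zta n ^ (b * x.1 + c * x.2 + a * max b2 (x.1 + x.2 + 1 - b1)) with hB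
      set C := ∑ x ∈ (Finset.Ico a3 b3 ×ˢ Finset.Ico a4 b4),
          zta n ^ (b * x.1 + c * x.2 + a * max b2 (x.1 + x.2 + 1 - a1)) with hC
      set D := ∑ x ∈ (Finset.Ico a3 b3 ×ˢ Finset.Ico a4 b4),
          zta n ^ (b * x.1 + c * x.2 + a * max a2 (x.1 + x.2 + 1 - b1)) with hD
      have n1 : ‖A + B - C - D‖ ≤ ‖A + B - C‖ + ‖D‖ := norm_sub_le _ _
      have n2 : ‖A + B - C‖ ≤ ‖A + B‖ + ‖C‖ := norm_sub_le _ _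
      have n3 : ‖A + B‖ ≤ ‖A‖ + ‖B‖ := norm_add_le _ _
      linarith
    rw [norm_mul] at hnorm4
    rw [hfa]
    rw [show 4 * (2 / ‖zta n ^ a - 1‖) * (ff n L b * (ff n L c + ff n L (c - b)) +
      ff n L (b + a) * (ff n L (c + a) + ff n L (c - b))) =
      4 * (2 * ff n L b * (ff n L c + ff n L (c - b)) +
        2 * ff n L (b + a) * (ff n L (c + a) + ff n L (c - b))) / ‖zta n ^ a - 1‖ by ring]
    rw [le_div_iff₀ hdpos]
    linarith [hnorm4]

-- dup zta
-- dup ff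
lemma zta_zpow_mod (n : ℕ) (hn : 0 < n) (t : ℤ) : zta n ^ t = zta n ^ (t % n) := by
  conv_lhs => rw [show t = t % n + n * (t / n) from (Int.emod_add_mul_ediv t n).symm]
  rw [zpow_add₀ (zta_ne_zero n), zpow_mul, zta_pow_n n hn, one_zpow, mul_one]

lemma ff_congr (n L : ℕ) {s t : ℤ} (h : zta n ^ s = zta n ^ t) : ff n L s = ff n L t := by
  unfold ff; rw [h]

lemma ff_mod (n L : ℕ) (hn : 0 < n) (t : ℤ) : ff n L t = ff n L (t % n) :=
  ff_congr n L (by rw [← zta_zpow_mod n hn t])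

lemma sum_shift (n L : ℕ) (hn : 0 < n) (d : ℤ) :
    ∑ c ∈ Finset.range n, ff n L (c + d) = ∑ t ∈ Finset.range n, ff n L t := by
  have hnz : (n:ℤ) ≠ 0 := by exact_mod_cast hn.ne'
  refine Finset.sum_nbij' (i := fun c => ((c + d) % n).toNat)
    (j := fun t => ((t - d) % n).toNat) ?_ ?_ ?_ ?_ ?_
  · intro c hc
    simp only [Finset.mem_range] at hc ⊢
    have h1 : 0 ≤ ((c:ℤ) + d) % n := Int.emod_nonneg _ hnz
    have h2 : ((c:ℤ) + d) % n < n := Int.emod_lt_of_pos _ (by exact_mod_cast hn)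
    omega
  · intro t ht
    simp only [Finset.mem_range] at ht ⊢
    have h1 : 0 ≤ ((t:ℤ) - d) % n := Int.emod_nonneg _ hnz
    have h2 : ((t:ℤ) - d) % n < n := Int.emod_lt_of_pos _ (by exact_mod_cast hn)
    omega
  · intro c hc
    simp only [Finset.mem_range] at hc
    have h1 : 0 ≤ ((c:ℤ) + d) % n := Int.emod_nonneg _ hnz
    have key : ((((c:ℤ) + d) % n).toNat : ℤ) = ((c:ℤ) + d) % n := Int.toNat_of_nonneg h1
    have h3 : ((((c:ℤ) + d) % n) - d) % n = (c:ℤ) % n := by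
      rw [Int.sub_emod, Int.emod_emod_of_dvd _ (dvd_refl _), ← Int.sub_emod]
      ring_nf
    have h4 : (c:ℤ) % n = c := Int.emod_eq_of_lt (by positivity) (by exact_mod_cast hc)
    show ((((((c:ℤ) + d) % n).toNat : ℤ) - d) % n).toNat = c
    rw [key, h3, h4]
    omega
  · intro t ht
    simp only [Finset.mem_range] at ht
    have h1 : 0 ≤ ((t:ℤ) - d) % n := Int.emod_nonneg _ hnz
    have key : ((((t:ℤ) - d) % n).toNat : ℤ) = ((t:ℤ) - d) % n := Int.toNat_of_nonneg h1
    have h3 : ((((t:ℤ) - d) % n) + d) % n = (t:ℤ) % n := by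
      rw [Int.add_emod, Int.emod_emod_of_dvd _ (dvd_refl _), ← Int.add_emod]
      ring_nf
    have h4 : (t:ℤ) % n = t := Int.emod_eq_of_lt (by positivity) (by exact_mod_cast ht)
    show ((((((t:ℤ) - d) % n).toNat : ℤ) + d) % n).toNat = t
    rw [key, h3, h4]
    omega
  · intro c hc
    have h1 : 0 ≤ ((c:ℤ) + d) % n := Int.emod_nonneg _ hnz
    have key : ((((c:ℤ) + d) % n).toNat : ℤ) = ((c:ℤ) + d) % n := Int.toNat_of_nonneg h1
    show ff n L ((c:ℤ) + d) = ff n L ((((c:ℤ) + d) % n).toNat : ℤ)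
    rw [ff_mod n L hn ((c:ℤ) + d), key]

-- dup zta
-- dup ff
lemma norm_exp_I_sub_one (θ : ℝ) :
    ‖Complex.exp (θ * Complex.I) - 1‖ = 2 * |Real.sin (θ / 2)| := by
  have h : Complex.exp (θ * Complex.I) - 1 = Complex.mk (Real.cos θ - 1) (Real.sin θ) := by
    rw [Complex.exp_mul_I]
    apply Complex.ext <;>
      simp [Complex.cos_ofReal_re, Complex.sin_ofReal_re]
  rw [h]
  rw [Complex.norm_def, Complex.normSq_mk]
  have hcos : Real.cos θ = 1 - 2 * Real.sin (θ / 2) ^ 2 := by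
    have h1 : Real.cos (2 * (θ/2)) = Real.cos (θ/2)^2 - Real.sin (θ/2)^2 :=
      Real.cos_two_mul' (θ/2)
    rw [show 2 * (θ/2) = θ by ring] at h1
    have h2 := Real.sin_sq_add_cos_sq (θ / 2)
    nlinarith
  have : (Real.cos θ - 1) * (Real.cos θ - 1) + Real.sin θ * Real.sin θ
      = (2 * |Real.sin (θ / 2)|) ^ 2 := by
    have h2 := Real.sin_sq_add_cos_sq θ
    rw [show (2 * |Real.sin (θ / 2)|) ^ 2 = 4 * Real.sin (θ/2) ^ 2 by
      rw [mul_pow, _root_.sq_abs]; ring]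
    nlinarith
  rw [this, Real.sqrt_sq (by positivity)]

lemma zta_pow_exp (n : ℕ) (hn : 0 < n) (t : ℕ) :
    zta n ^ (t : ℤ) = Complex.exp ((2 * Real.pi * t / n : ℝ) * Complex.I) := by
  rw [zta, ← Complex.exp_int_mul]
  congr 1
  have hn' : (n : ℂ) ≠ 0 := Nat.cast_ne_zero.mpr hn.ne'
  push_cast
  field_simp

lemma ff_bound (n L : ℕ) (hn : 0 < n) (t : ℕ) (h1 : 1 ≤ t) (h2 : t < n) :
    ff n L (t : ℤ) ≤ (n:ℝ) / 2 * (1 / t + 1 / ((n:ℝ) - t)) := by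
  have hnR : (0:ℝ) < n := by exact_mod_cast hn
  have htR : (0:ℝ) < t := by exact_mod_cast h1
  have hnt : (0:ℝ) < (n:ℝ) - t := by
    have : (t:ℝ) < n := by exact_mod_cast h2
    linarith
  have hθ : zta n ^ (t:ℤ) - 1 = Complex.exp ((2 * Real.pi * t / n : ℝ) * Complex.I) - 1 := by
    rw [zta_pow_exp n hn t]
  have hnorm : ‖zta n ^ (t:ℤ) - 1‖ = 2 * Real.sin (Real.pi * t / n) := by
    rw [hθ, norm_exp_I_sub_one]
    have harg : (2 * Real.pi * t / n) / 2 = Real.pi * t / n := by ring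
    rw [harg]
    congr 1
    apply _root_.abs_of_nonneg
    apply Real.sin_nonneg_of_nonneg_of_le_pi
    · positivity
    · rw [div_le_iff₀ hnR]
      have : (t:ℝ) ≤ n := by exact_mod_cast h2.le
      nlinarith [Real.pi_pos]
  -- sin lower bound
  have hsin : Real.sin (Real.pi * t / n) ≥ 2 * min (t:ℝ) ((n:ℝ) - t) / n := by
    rcases le_or_gt (2 * t) n with hc | hc
    · have hmin : min (t:ℝ) ((n:ℝ) - t) = t := by
        have : (2*t : ℝ) ≤ n := by exact_mod_cast hc
        apply min_eq_left; linarith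
      rw [hmin]
      have hle : Real.pi * t / n ≤ Real.pi / 2 := by
        rw [div_le_div_iff₀ hnR (by norm_num)]
        have : (2*t : ℝ) ≤ n := by exact_mod_cast hc
        nlinarith [Real.pi_pos]
      have := Real.mul_le_sin (x := Real.pi * t / n) (by positivity) hle
      calc 2 * (t:ℝ) / n = 2 / Real.pi * (Real.pi * t / n) := by
            field_simp
          _ ≤ Real.sin (Real.pi * t / n) := this
    · have hmin : min (t:ℝ) ((n:ℝ) - t) = (n:ℝ) - t := by
        have : ((n:ℝ)) < 2*t := by exact_mod_cast hc
        apply min_eq_right; linarith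
      rw [hmin]
      have hrefl : Real.sin (Real.pi * t / n) = Real.sin (Real.pi * ((n:ℝ) - t) / n) := by
        rw [show Real.pi * ((n:ℝ) - t) / n = Real.pi - Real.pi * t / n by field_simp,
          Real.sin_pi_sub]
      rw [hrefl]
      have hle : Real.pi * ((n:ℝ) - t) / n ≤ Real.pi / 2 := by
        rw [div_le_div_iff₀ hnR (by norm_num)]
        have : ((n:ℝ)) < 2*t := by exact_mod_cast hc
        nlinarith [Real.pi_pos]
      have := Real.mul_le_sin (x := Real.pi * ((n:ℝ) - t) / n) (by positivity) hle
      calc 2 * ((n:ℝ) - t) / n = 2 / Real.pi * (Real.pi * ((n:ℝ) - t) / n) := by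
            field_simp
          _ ≤ Real.sin (Real.pi * ((n:ℝ) - t) / n) := this
  have hminpos : (0:ℝ) < min (t:ℝ) ((n:ℝ) - t) := lt_min htR hnt
  have hkey : 2 * min (t:ℝ) ((n:ℝ) - t) ≤ Real.sin (Real.pi * t / n) * n := by
    rw [ge_iff_le, div_le_iff₀ hnR] at hsin
    linarith
  have hnormpos : 0 < ‖zta n ^ (t:ℤ) - 1‖ := by
    rw [hnorm]; nlinarith
  have hne1 : zta n ^ (t:ℤ) ≠ 1 := by
    intro h
    rw [h] at hnormpos; simp at hnormpos
  have hff : ff n L (t:ℤ) ≤ 2 / ‖zta n ^ (t:ℤ) - 1‖ := by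
    unfold ff; rw [if_neg hne1]; exact min_le_right _ _
  refine hff.trans ?_
  have step1 : 2 / ‖zta n ^ (t:ℤ) - 1‖ ≤ (n:ℝ) / (2 * min (t:ℝ) ((n:ℝ) - t)) := by
    rw [hnorm, div_le_div_iff₀ (by nlinarith) (by nlinarith)]
    nlinarith
  refine step1.trans ?_
  have hmle : 1 / min (t:ℝ) ((n:ℝ) - t) ≤ 1/t + 1/((n:ℝ) - t) := by
    rcases min_cases (t:ℝ) ((n:ℝ) - t) with ⟨he, _⟩ | ⟨he, _⟩ <;> rw [he]
    · have : 0 < 1/((n:ℝ) - t) := by positivity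
      linarith
    · have : 0 < 1/(t:ℝ) := by positivity
      linarith
  calc (n:ℝ) / (2 * min (t:ℝ) ((n:ℝ) - t)) = (n:ℝ)/2 * (1 / min (t:ℝ) ((n:ℝ) - t)) := by
        ring
    _ ≤ (n:ℝ)/2 * (1/t + 1/((n:ℝ) - t)) := by
        apply mul_le_mul_of_nonneg_left hmle (by positivity)

-- dup ff
lemma harmonic_le (m : ℕ) : ∑ t ∈ Finset.range m, (1:ℝ)/(t+1) ≤ 1 + Real.log m := by
  induction m with
  | zero => simp
  | succ m ih =>
      rcases Nat.eq_zero_or_pos m with hm | hm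
      · subst hm; simp
      · rw [Finset.sum_range_succ]
        have hstep : (1:ℝ)/(m+1) ≤ Real.log (m+1) - Real.log m := by
          have hmpos : (0:ℝ) < m := by exact_mod_cast hm
          have hx : (0:ℝ) < (m:ℝ)/(m+1) := by positivity
          have := Real.log_le_sub_one_of_pos hx
          rw [Real.log_div (by positivity) (by positivity)] at this
          have : Real.log m - Real.log (m+1) ≤ (m:ℝ)/(m+1) - 1 := this
          have he : (m:ℝ)/(m+1) - 1 = -(1/(m+1)) := by field_simp; ring
          rw [he] at this
          linarith
        have hlog : Real.log (m+1) = Real.log ((m:ℕ)+1 : ℕ) := by push_cast; ring_nf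
        push_cast
        linarith [ih]

lemma ff_zero (n L : ℕ) : ff n L 0 = L := by
  unfold ff; rw [zpow_zero, if_pos rfl]

lemma G_bound (n L : ℕ) (hn : 0 < n) :
    ∑ t ∈ Finset.range n, ff n L (t : ℤ) ≤ (L:ℝ) + n * (1 + Real.log n) := by
  obtain ⟨m, rfl⟩ : ∃ m, n = m + 1 := ⟨n - 1, by omega⟩
  rw [Finset.sum_range_succ']
  have h0 : ff (m+1) L ((0:ℕ):ℤ) = L := by
    norm_num [ff_zero]
  have hidx : ∀ k:ℕ, (((k+1:ℕ)):ℤ) = (k:ℤ)+1 := fun k => by push_cast; ring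
  have hmain : ∑ t ∈ Finset.range m, ff (m+1) L ((t:ℤ) + 1) ≤
      ((m+1:ℕ):ℝ) * (1 + Real.log ((m+1:ℕ):ℝ)) := by
    have hb : ∀ t ∈ Finset.range m, ff (m+1) L ((t:ℤ)+1) ≤
        ((m+1:ℕ):ℝ)/2 * (1/((t:ℝ)+1) + 1/((m:ℝ) - t)) := by
      intro t ht
      rw [Finset.mem_range] at ht
      have hbb := ff_bound (m+1) L hn (t+1) (by omega) (by omega)
      rw [show (((t+1:ℕ)):ℤ) = (t:ℤ)+1 by push_cast; ring] at hbb
      refine hbb.trans_eq ?_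
      push_cast
      ring
    have hrefl : ∑ t ∈ Finset.range m, 1/((m:ℝ) - t)
        = ∑ t ∈ Finset.range m, 1/((t:ℝ)+1) := by
      rw [← Finset.sum_range_reflect (fun j => 1/((j:ℝ)+1)) m]
      refine Finset.sum_congr rfl (fun t ht => ?_)
      rw [Finset.mem_range] at ht
      have hc : ((m - 1 - t : ℕ) : ℝ) = (m:ℝ) - (1 + t) := by
        rw [Nat.sub_sub, Nat.cast_sub (by omega)]
        push_cast; ring
      rw [hc]
      ring_nf
    have hh : ∑ t ∈ Finset.range m, 1/((t:ℝ)+1) ≤ 1 + Real.log m := by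
      refine le_trans (le_of_eq ?_) (harmonic_le m)
      refine Finset.sum_congr rfl (fun t _ => by ring)
    have hlog : Real.log m ≤ Real.log ((m+1:ℕ):ℝ) := by
      rcases Nat.eq_zero_or_pos m with h0' | h0'
      · subst h0'
        simp only [Nat.cast_zero, Real.log_zero]
        apply Real.log_nonneg; push_cast; norm_num
      · apply Real.log_le_log (by exact_mod_cast h0')
        push_cast; linarith
    calc ∑ t ∈ Finset.range m, ff (m+1) L ((t:ℤ) + 1)
        ≤ ∑ t ∈ Finset.range m, ((m+1:ℕ):ℝ)/2 * (1/((t:ℝ)+1) + 1/((m:ℝ) - t)) :=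
          Finset.sum_le_sum hb
      _ = ((m+1:ℕ):ℝ)/2 * (∑ t ∈ Finset.range m, 1/((t:ℝ)+1)
            + ∑ t ∈ Finset.range m, 1/((m:ℝ) - t)) := by
          rw [← Finset.sum_add_distrib, Finset.mul_sum]
      _ ≤ ((m+1:ℕ):ℝ) * (1 + Real.log ((m+1:ℕ):ℝ)) := by
          rw [hrefl]
          have hp : (0:ℝ) ≤ ((m+1:ℕ):ℝ)/2 := by positivity
          nlinarith
  simp only [hidx]
  rw [h0]
  linarith

-- dup zta
-- dup ff
-- dup SS
lemma zta_zpow_exp (n : ℕ) (m : ℤ) :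
    zta n ^ m = Complex.exp (2 * Real.pi * Complex.I * m / n) := by
  rw [zta, ← Complex.exp_int_mul]
  congr 1
  ring

lemma inner_eq (n : ℕ) (a1 b1 a2 b2 a3 b3 a4 b4 : ℤ) (a b c : ℕ) :
    (∑ i ∈ (((Finset.Ico a1 b1 ×ˢ Finset.Ico a2 b2) ×ˢ
        (Finset.Ico a3 b3 ×ˢ Finset.Ico a4 b4)).filter
        (fun i => i.1.1 + i.1.2 = i.2.1 + i.2.2)),
      Complex.exp (2 * Real.pi * Complex.I * (a * i.1.2 + b * i.2.1 + c * i.2.2) / n))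
    = SS n a1 b1 a2 b2 a3 b3 a4 b4 a b c := by
  unfold SS
  refine Finset.sum_nbij' (i := fun x => ((x.2.1, x.2.2), x.1.2))
    (j := fun y => ((y.1.1 + y.1.2 - y.2, y.2), (y.1.1, y.1.2))) ?_ ?_ ?_ ?_ ?_
  · rintro ⟨⟨x1, x2⟩, ⟨x3, x4⟩⟩ hx
    simp only [Finset.mem_filter, Finset.mem_product, Finset.mem_Ico] at hx ⊢
    omega
  · rintro ⟨⟨y1, y2⟩, y3⟩ hy
    simp only [Finset.mem_filter, Finset.mem_product, Finset.mem_Ico] at hy ⊢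
    omega
  · rintro ⟨⟨x1, x2⟩, ⟨x3, x4⟩⟩ hx
    simp only [Finset.mem_filter, Finset.mem_product, Finset.mem_Ico] at hx
    simp only [Prod.mk.injEq, and_true, true_and]
    omega
  · rintro ⟨⟨y1, y2⟩, y3⟩ hy
    rfl
  · rintro ⟨⟨x1, x2⟩, ⟨x3, x4⟩⟩ hx
    simp only
    rw [zta_zpow_exp]
    congr 1
    push_cast
    ring

-- dup ff
-- dup SS
theorem sum_abs_quadruple_interval_sum_le (n L : ℕ) (hn : 0 < n) (hL : 0 < L)
    (a₁ b₁ a₂ b₂ a₃ b₃ a₄ b₄ : ℤ)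
    (h₁ : b₁ - a₁ ≤ L) (h₂ : b₂ - a₂ ≤ L) (h₃ : b₃ - a₃ ≤ L) (h₄ : b₄ - a₄ ≤ L) :
    ∑ a ∈ Finset.range n, ∑ b ∈ Finset.range n, ∑ c ∈ Finset.range n,
        ‖(∑ i ∈ (((Finset.Ico a₁ b₁ ×ˢ Finset.Ico a₂ b₂) ×ˢ
              (Finset.Ico a₃ b₃ ×ˢ Finset.Ico a₄ b₄)).filter
              (fun i => i.1.1 + i.1.2 = i.2.1 + i.2.2)),
          Complex.exp (2 * Real.pi * Complex.I * (a * i.1.2 + b * i.2.1 + c * i.2.2) / n))‖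
      ≤ 936 * (max n L : ℝ) ^ 3 * (1 + Real.log n) ^ 3 := by
  have hlog : (0:ℝ) ≤ Real.log n := Real.log_nonneg (by exact_mod_cast hn)
  have hM1 : (1:ℝ) ≤ (max n L : ℕ) := by
    have : 1 ≤ max n L := le_trans hn (le_max_left n L)
    exact_mod_cast this
  have hMpos : (0:ℝ) ≤ ((max n L : ℕ) : ℝ) := by linarith
  by_cases hcase : a₁ ≤ b₁ ∧ a₂ ≤ b₂ ∧ a₃ ≤ b₃
  case neg =>
    have hempty : (((Finset.Ico a₁ b₁ ×ˢ Finset.Ico a₂ b₂) ×ˢ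
        (Finset.Ico a₃ b₃ ×ˢ Finset.Ico a₄ b₄)).filter
        (fun i => i.1.1 + i.1.2 = i.2.1 + i.2.2)) = ∅ := by
      push_neg at hcase
      rcases le_or_gt a₁ b₁ with hc1 | hc1
      · rcases le_or_gt a₂ b₂ with hc2 | hc2
        · have hc3 := hcase hc1 hc2
          rw [Finset.Ico_eq_empty (a := a₃) (b := b₃) (by omega)]
          simp
        · rw [Finset.Ico_eq_empty (a := a₂) (b := b₂) (by omega)]
          simp
      · rw [Finset.Ico_eq_empty (a := a₁) (b := b₁) (by omega)]
        simp
    rw [hempty]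
    simp only [Finset.sum_empty, map_zero, norm_zero, Finset.sum_const, smul_zero, nsmul_eq_mul,
      mul_zero]
    have hmax : (0:ℝ) ≤ (n:ℝ) ⊔ (L:ℝ) := le_max_of_le_left (by positivity)
    have h1pl : (0:ℝ) ≤ 1 + Real.log n := by linarith
    have h3 : (0:ℝ) ≤ ((n:ℝ) ⊔ (L:ℝ))^3 * (1 + Real.log n)^3 :=
      mul_nonneg (pow_nonneg hmax 3) (pow_nonneg h1pl 3)
    nlinarith
  case pos =>
    obtain ⟨h11, h22, h33⟩ := hcase
    set G := ∑ t ∈ Finset.range n, ff n L (t : ℤ) with hG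
    have hGnn : 0 ≤ G := Finset.sum_nonneg (fun t _ => ff_nonneg n L t)
    have hsub : ∀ b : ℕ, ∑ c ∈ Finset.range n, ff n L ((c:ℤ) - (b:ℤ)) = G := by
      intro b
      rw [hG, ← sum_shift n L hn (-(b:ℤ))]
      exact Finset.sum_congr rfl (fun c _ => by rw [sub_eq_add_neg])
    have hadd : ∀ a : ℕ, ∑ c ∈ Finset.range n, ff n L ((c:ℤ) + (a:ℤ)) = G := fun a => by
      rw [hG]; exact sum_shift n L hn (a:ℤ)
    calc ∑ a ∈ Finset.range n, ∑ b ∈ Finset.range n, ∑ c ∈ Finset.range n,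
        ‖(∑ i ∈ (((Finset.Ico a₁ b₁ ×ˢ Finset.Ico a₂ b₂) ×ˢ
              (Finset.Ico a₃ b₃ ×ˢ Finset.Ico a₄ b₄)).filter
              (fun i => i.1.1 + i.1.2 = i.2.1 + i.2.2)),
          Complex.exp (2 * Real.pi * Complex.I * (a * i.1.2 + b * i.2.1 + c * i.2.2) / n))‖
        = ∑ a ∈ Finset.range n, ∑ b ∈ Finset.range n, ∑ c ∈ Finset.range n,
            ‖SS n a₁ b₁ a₂ b₂ a₃ b₃ a₄ b₄ (a:ℤ) (b:ℤ) (c:ℤ)‖ := by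
          refine Finset.sum_congr rfl (fun a _ => Finset.sum_congr rfl
            (fun b _ => Finset.sum_congr rfl (fun c _ => ?_)))
          rw [inner_eq]
      _ ≤ ∑ a ∈ Finset.range n, ∑ b ∈ Finset.range n, ∑ c ∈ Finset.range n,
            4 * ff n L (a:ℤ) * (ff n L (b:ℤ) * (ff n L (c:ℤ) + ff n L ((c:ℤ) - (b:ℤ))) +
              ff n L ((b:ℤ) + (a:ℤ)) * (ff n L ((c:ℤ) + (a:ℤ)) + ff n L ((c:ℤ) - (b:ℤ)))) := by
          refine Finset.sum_le_sum (fun a _ => Finset.sum_le_sum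
            (fun b _ => Finset.sum_le_sum (fun c _ => ?_)))
          exact S_bound n L a₁ b₁ a₂ b₂ a₃ b₃ a₄ b₄ (a:ℤ) (b:ℤ) (c:ℤ)
            h11 h22 h33 h₂ h₃ h₄
      _ = 16 * G^3 := by
          have hc : ∀ a b : ℕ, ∑ c ∈ Finset.range n,
              (4 * ff n L (a:ℤ) * (ff n L (b:ℤ) * (ff n L (c:ℤ) + ff n L ((c:ℤ) - (b:ℤ))) +
                ff n L ((b:ℤ) + (a:ℤ)) * (ff n L ((c:ℤ) + (a:ℤ)) + ff n L ((c:ℤ) - (b:ℤ)))))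
              = 8 * ff n L (a:ℤ) * (ff n L (b:ℤ) + ff n L ((b:ℤ) + (a:ℤ))) * G := by
            intro a b
            calc ∑ c ∈ Finset.range n,
                (4 * ff n L (a:ℤ) * (ff n L (b:ℤ) * (ff n L (c:ℤ) + ff n L ((c:ℤ) - (b:ℤ))) +
                  ff n L ((b:ℤ) + (a:ℤ)) * (ff n L ((c:ℤ) + (a:ℤ)) + ff n L ((c:ℤ) - (b:ℤ)))))
                = ∑ c ∈ Finset.range n,
                  ((4 * ff n L (a:ℤ) * ff n L (b:ℤ)) * ff n L (c:ℤ) +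
                   (4 * ff n L (a:ℤ) * ff n L (b:ℤ)) * ff n L ((c:ℤ) - (b:ℤ)) +
                   ((4 * ff n L (a:ℤ) * ff n L ((b:ℤ) + (a:ℤ))) * ff n L ((c:ℤ) + (a:ℤ)) +
                    (4 * ff n L (a:ℤ) * ff n L ((b:ℤ) + (a:ℤ))) * ff n L ((c:ℤ) - (b:ℤ)))) :=
                  Finset.sum_congr rfl (fun c _ => by ring)
              _ = (4 * ff n L (a:ℤ) * ff n L (b:ℤ)) * G +
                  (4 * ff n L (a:ℤ) * ff n L (b:ℤ)) * G +
                  ((4 * ff n L (a:ℤ) * ff n L ((b:ℤ) + (a:ℤ))) * G +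
                   (4 * ff n L (a:ℤ) * ff n L ((b:ℤ) + (a:ℤ))) * G) := by
                  rw [Finset.sum_add_distrib, Finset.sum_add_distrib, Finset.sum_add_distrib,
                    ← Finset.mul_sum, ← Finset.mul_sum, ← Finset.mul_sum, ← Finset.mul_sum,
                    hsub b, hadd a]
              _ = 8 * ff n L (a:ℤ) * (ff n L (b:ℤ) + ff n L ((b:ℤ) + (a:ℤ))) * G := by ring
          have hb : ∀ a : ℕ, ∑ b ∈ Finset.range n,
              (8 * ff n L (a:ℤ) * (ff n L (b:ℤ) + ff n L ((b:ℤ) + (a:ℤ))) * G)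
              = 16 * ff n L (a:ℤ) * G^2 := by
            intro a
            calc ∑ b ∈ Finset.range n,
                (8 * ff n L (a:ℤ) * (ff n L (b:ℤ) + ff n L ((b:ℤ) + (a:ℤ))) * G)
                = ∑ b ∈ Finset.range n,
                  ((8 * ff n L (a:ℤ) * G) * ff n L (b:ℤ) +
                   (8 * ff n L (a:ℤ) * G) * ff n L ((b:ℤ) + (a:ℤ))) :=
                  Finset.sum_congr rfl (fun b _ => by ring)
              _ = (8 * ff n L (a:ℤ) * G) * G + (8 * ff n L (a:ℤ) * G) * G := by
                  rw [Finset.sum_add_distrib, ← Finset.mul_sum, ← Finset.mul_sum, hadd a]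
              _ = 16 * ff n L (a:ℤ) * G^2 := by ring
          calc ∑ a ∈ Finset.range n, ∑ b ∈ Finset.range n, ∑ c ∈ Finset.range n,
              (4 * ff n L (a:ℤ) * (ff n L (b:ℤ) * (ff n L (c:ℤ) + ff n L ((c:ℤ) - (b:ℤ))) +
                ff n L ((b:ℤ) + (a:ℤ)) * (ff n L ((c:ℤ) + (a:ℤ)) + ff n L ((c:ℤ) - (b:ℤ)))))
              = ∑ a ∈ Finset.range n, ∑ b ∈ Finset.range n,
                (8 * ff n L (a:ℤ) * (ff n L (b:ℤ) + ff n L ((b:ℤ) + (a:ℤ))) * G) := by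
                refine Finset.sum_congr rfl (fun a _ => Finset.sum_congr rfl (fun b _ => ?_))
                exact hc a b
            _ = ∑ a ∈ Finset.range n, 16 * ff n L (a:ℤ) * G^2 := by
                refine Finset.sum_congr rfl (fun a _ => ?_)
                exact hb a
            _ = ∑ a ∈ Finset.range n, (16 * G^2) * ff n L (a:ℤ) :=
                Finset.sum_congr rfl (fun a _ => by ring)
            _ = (16 * G^2) * G := by rw [← Finset.mul_sum, ← hG]
            _ = 16 * G^3 := by ring
      _ ≤ 936 * ((max n L : ℕ) : ℝ)^3 * (1 + Real.log n)^3 := by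
          have hGb : G ≤ (L:ℝ) + n * (1 + Real.log n) := G_bound n L hn
          have hLM : (L:ℝ) ≤ ((max n L : ℕ):ℝ) := by exact_mod_cast le_max_right n L
          have hnM : (n:ℝ) ≤ ((max n L : ℕ):ℝ) := by exact_mod_cast le_max_left n L
          have h1log : (1:ℝ) ≤ 1 + Real.log n := by linarith
          have hG2 : G ≤ 2 * ((max n L : ℕ):ℝ) * (1 + Real.log n) := by nlinarith
          have hpow : G^3 ≤ (2 * ((max n L : ℕ):ℝ) * (1 + Real.log n))^3 :=
            pow_le_pow_left₀ hGnn hG2 3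
          have hM3 : (0:ℝ) ≤ ((max n L : ℕ):ℝ)^3 * (1 + Real.log n)^3 := by positivity
          nlinarith
      _ = 936 * ((n:ℝ) ⊔ (L:ℝ))^3 * (1 + Real.log n)^3 := by
          rw [Nat.cast_max]
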